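/- arXiv:2012.00062 — 2 statements merged into one kernel-verified Lean document; each statement's English description precedes it below -/
import Mathlib

section
/- Let G^1_m(q) = \sum_{n=0}^\infty (-1)^n q^{n(n+1)/2+mn}/(q;q)_n^2 \cdot (2m + E_1(q) + 2\sum_{j=1}^n (1+q^j)/(1-q^j)) for |q|<1, where E_1(q) = 1 - 4\sum_{n\geq1} q^n/(1-q^n). Then G^1_m satisfies the same recursion as G^0_m: G^1_{m+1}(q) - (2-q^m) G^1_m(q) + G^1_{m-1}(q) = 0 for all m \in \mathbb{Z}. -/
/-- `(q;q)_n = ∏_{j=1}^n (1-q^j)`. -/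
noncomputable def qPoch (q : ℂ) (n : ℕ) : ℂ :=
  ∏ j ∈ Finset.range n, (1 - q ^ (j + 1))

/-- Eisenstein series `E₁(q) = 1 - 4 ∑_{n≥1} q^n/(1-q^n)`. -/
noncomputable def Eone (q : ℂ) : ℂ :=
  1 - 4 * ∑' n : ℕ, q ^ (n + 1) / (1 - q ^ (n + 1))

/-- `G¹_m(q) = ∑_{n≥0} (-1)^n q^{n(n+1)/2+mn}/(q;q)_n² (2m + E₁(q) + 2∑_{j=1}^n (1+q^j)/(1-q^j))`. -/
noncomputable def G1 (q : ℂ) (m : ℤ) : ℂ :=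
  ∑' n : ℕ, (-1 : ℂ) ^ n * q ^ (n * (n + 1) / 2) * q ^ (m * (n : ℤ)) / (qPoch q n) ^ 2 *
    (2 * m + Eone q + 2 * ∑ j ∈ Finset.Icc 1 n, (1 + q ^ j) / (1 - q ^ j))

noncomputable def Sfun (q : ℂ) (n : ℕ) : ℂ :=
  ∑ j ∈ Finset.Icc 1 n, (1 + q ^ j) / (1 - q ^ j)

noncomputable def tTerm (q : ℂ) (m : ℤ) (n : ℕ) : ℂ :=
  (-1 : ℂ) ^ n * q ^ (n * (n + 1) / 2) * q ^ (m * (n : ℤ)) / (qPoch q n) ^ 2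

noncomputable def aTerm (q : ℂ) (m : ℤ) (n : ℕ) : ℂ :=
  tTerm q m n * (2 * m + Eone q + 2 * Sfun q n)

noncomputable def bSeq (q : ℂ) (m : ℤ) : ℕ → ℂ
  | 0 => 0
  | (n+1) => -q ^ m * aTerm q m n

lemma G1_eq (q : ℂ) (m : ℤ) : G1 q m = ∑' n : ℕ, aTerm q m n := rfl

lemma tri_succ (k : ℕ) : (k+1)*((k+1)+1)/2 = k*(k+1)/2 + (k+1) := by
  obtain ⟨c, hc⟩ := Nat.even_mul_succ_self k
  have h : (k+1)*((k+1)+1) = k*(k+1) + 2*(k+1) := by ring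
  omega

lemma qPoch_succ (q : ℂ) (n : ℕ) : qPoch q (n+1) = qPoch q n * (1 - q ^ (n+1)) :=
  Finset.prod_range_succ _ _

lemma Sfun_succ (q : ℂ) (n : ℕ) :
    Sfun q (n+1) = Sfun q n + (1 + q ^ (n+1)) / (1 - q ^ (n+1)) :=
  Finset.sum_Icc_succ_top (Nat.le_add_left 1 n) _

lemma one_sub_pow_ne {q : ℂ} (hq : ‖q‖ < 1) (j : ℕ) (hj : 1 ≤ j) : (1 : ℂ) - q ^ j ≠ 0 := by
  have h : ‖q ^ j‖ < 1 := by
    rw [norm_pow]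
    calc ‖q‖ ^ j ≤ ‖q‖ ^ 1 := pow_le_pow_of_le_one (norm_nonneg q) hq.le hj
    _ < 1 := by simpa using hq
  intro h0
  have h1 : q ^ j = 1 := by linear_combination -h0
  rw [h1] at h; simp at h

lemma norm_one_sub_pow_ge {q : ℂ} (hq : ‖q‖ < 1) (j : ℕ) (hj : 1 ≤ j) :
    1 - ‖q‖ ≤ ‖(1 : ℂ) - q ^ j‖ := by
  have h : ‖q ^ j‖ ≤ ‖q‖ := by
    rw [norm_pow]
    calc ‖q‖ ^ j ≤ ‖q‖ ^ 1 := pow_le_pow_of_le_one (norm_nonneg q) hq.le hj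
    _ = ‖q‖ := pow_one _
  calc 1 - ‖q‖ ≤ ‖(1:ℂ)‖ - ‖q ^ j‖ := by rw [norm_one]; linarith
  _ ≤ ‖(1:ℂ) - q ^ j‖ := norm_sub_norm_le _ _

lemma norm_qPoch_ge {q : ℂ} (hq : ‖q‖ < 1) (n : ℕ) : (1 - ‖q‖) ^ n ≤ ‖qPoch q n‖ := by
  rw [qPoch, norm_prod]
  calc (1 - ‖q‖) ^ n = ∏ _i ∈ Finset.range n, (1 - ‖q‖) := by
        rw [Finset.prod_const, Finset.card_range]
  _ ≤ ∏ i ∈ Finset.range n, ‖(1:ℂ) - q ^ (i+1)‖ :=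
      Finset.prod_le_prod (fun i _ => by linarith)
        (fun i _ => norm_one_sub_pow_ge hq (i+1) (Nat.succ_le_succ (Nat.zero_le i)))

lemma qPoch_ne {q : ℂ} (hq : ‖q‖ < 1) (n : ℕ) : qPoch q n ≠ 0 := by
  have h := norm_qPoch_ge hq n
  have h1 : (0:ℝ) < (1 - ‖q‖) ^ n := pow_pos (by linarith) n
  intro h0; rw [h0, norm_zero] at h; linarith

lemma norm_Sfun_le {q : ℂ} (hq : ‖q‖ < 1) (n : ℕ) :
    ‖Sfun q n‖ ≤ n * ((1 + ‖q‖) / (1 - ‖q‖)) := by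
  rw [Sfun]
  calc ‖∑ j ∈ Finset.Icc 1 n, (1 + q ^ j) / (1 - q ^ j)‖
      ≤ ∑ j ∈ Finset.Icc 1 n, ‖(1 + q ^ j) / (1 - q ^ j)‖ := norm_sum_le _ _
  _ ≤ ∑ _j ∈ Finset.Icc 1 n, (1 + ‖q‖) / (1 - ‖q‖) := by
      refine Finset.sum_le_sum (fun j hj => ?_)
      rw [Finset.mem_Icc] at hj
      rw [norm_div]
      refine div_le_div₀ (by positivity) ?_ (by linarith) (norm_one_sub_pow_ge hq j hj.1)
      calc ‖1 + q ^ j‖ ≤ ‖(1:ℂ)‖ + ‖q ^ j‖ := norm_add_le _ _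
      _ ≤ 1 + ‖q‖ := by
          rw [norm_one, norm_pow]
          have h2 : ‖q‖ ^ j ≤ ‖q‖ ^ 1 := pow_le_pow_of_le_one (norm_nonneg q) hq.le hj.1
          rw [pow_one] at h2; linarith
  _ = n * ((1 + ‖q‖) / (1 - ‖q‖)) := by
      rw [Finset.sum_const, Nat.card_Icc]
      simp [nsmul_eq_mul]

lemma norm_s_le {q : ℂ} (hq : ‖q‖ < 1) (m : ℤ) (n : ℕ) :
    ‖(2 * (m:ℂ) + Eone q + 2 * Sfun q n)‖ ≤
      (2 * |(m:ℝ)| + ‖Eone q‖ + 2 * ((1 + ‖q‖) / (1 - ‖q‖))) * (n + 1) := by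
  have hS := norm_Sfun_le hq n
  have h1 : ‖(2 * (m:ℂ) + Eone q + 2 * Sfun q n)‖
      ≤ 2 * |(m:ℝ)| + ‖Eone q‖ + 2 * ‖Sfun q n‖ := by
    calc ‖(2 * (m:ℂ) + Eone q + 2 * Sfun q n)‖
        ≤ ‖2 * (m:ℂ) + Eone q‖ + ‖2 * Sfun q n‖ := norm_add_le _ _
    _ ≤ ‖2 * (m:ℂ)‖ + ‖Eone q‖ + ‖2 * Sfun q n‖ := by
        linarith [norm_add_le (2 * (m:ℂ)) (Eone q)]
    _ = 2 * |(m:ℝ)| + ‖Eone q‖ + 2 * ‖Sfun q n‖ := by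
        rw [norm_mul, norm_mul]
        norm_num
  have hpos : (0:ℝ) ≤ (1 + ‖q‖) / (1 - ‖q‖) :=
    div_nonneg (by linarith [norm_nonneg q]) (by linarith)
  have hE : (0:ℝ) ≤ ‖Eone q‖ := norm_nonneg _
  have hm : (0:ℝ) ≤ |(m:ℝ)| := abs_nonneg _
  have hn : (0:ℝ) ≤ (n:ℝ) := Nat.cast_nonneg n
  calc ‖(2 * (m:ℂ) + Eone q + 2 * Sfun q n)‖
      ≤ 2 * |(m:ℝ)| + ‖Eone q‖ + 2 * ((n:ℝ) * ((1 + ‖q‖) / (1 - ‖q‖))) := by linarith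
  _ ≤ (2 * |(m:ℝ)| + ‖Eone q‖ + 2 * ((1 + ‖q‖) / (1 - ‖q‖))) * (n + 1) := by
      nlinarith [mul_nonneg (show (0:ℝ) ≤ 2 * |(m:ℝ)| + ‖Eone q‖ by linarith) hn]

lemma norm_t_le {q : ℂ} (hq0 : q ≠ 0) (hq : ‖q‖ < 1) (m : ℤ) (n : ℕ) :
    ‖tTerm q m n‖ ≤ (‖q‖ ^ (-|m|) * ((1 - ‖q‖) ^ 2)⁻¹) ^ n * ‖q‖ ^ (n * (n + 1) / 2) := by
  have hr0 : (0:ℝ) < ‖q‖ := norm_pos_iff.mpr hq0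
  have h1r : (0:ℝ) < 1 - ‖q‖ := by linarith
  have hPn : ((1 - ‖q‖) ^ 2) ^ n ≤ ‖qPoch q n‖ ^ 2 := by
    rw [← pow_mul, mul_comm, pow_mul]
    exact pow_le_pow_left₀ (by positivity) (norm_qPoch_ge hq n) 2
  have hY : ‖q‖ ^ (m * (n:ℤ)) ≤ (‖q‖ ^ (-|m|)) ^ n := by
    rw [← zpow_natCast (‖q‖ ^ (-|m|)), ← zpow_mul]
    exact zpow_le_zpow_right_of_le_one₀ hr0 hq.le
      (by nlinarith [neg_abs_le m, Int.natCast_nonneg n] : -|m| * (n:ℤ) ≤ m * (n:ℤ))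
  have key : ‖q‖ ^ (m * (n:ℤ)) / ‖qPoch q n‖ ^ 2
      ≤ (‖q‖ ^ (-|m|)) ^ n / ((1 - ‖q‖) ^ 2) ^ n :=
    div_le_div₀ (by positivity) hY (by positivity) hPn
  have hnorm : ‖tTerm q m n‖
      = ‖q‖ ^ (n * (n + 1) / 2) * (‖q‖ ^ (m * (n:ℤ)) / ‖qPoch q n‖ ^ 2) := by
    rw [tTerm, norm_div, norm_mul, norm_mul, norm_pow, norm_pow, norm_pow, norm_neg, norm_one,
      norm_zpow]
    ring
  rw [hnorm, mul_pow]
  calc ‖q‖ ^ (n * (n + 1) / 2) * (‖q‖ ^ (m * (n:ℤ)) / ‖qPoch q n‖ ^ 2)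
      ≤ ‖q‖ ^ (n * (n + 1) / 2) * ((‖q‖ ^ (-|m|)) ^ n / ((1 - ‖q‖) ^ 2) ^ n) :=
        mul_le_mul_of_nonneg_left key (by positivity)
  _ = (‖q‖ ^ (-|m|)) ^ n * (((1 - ‖q‖) ^ 2)⁻¹) ^ n * ‖q‖ ^ (n * (n + 1) / 2) := by
      rw [inv_pow]; ring

lemma maj_summable {r A : ℝ} (hr0 : 0 < r) (hr1 : r < 1) (hA : 0 ≤ A) :
    Summable (fun n : ℕ => (n + 1 : ℝ) * A ^ n * r ^ (n * (n + 1) / 2)) := by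
  refine summable_of_ratio_norm_eventually_le (r := 1/2) (by norm_num) ?_
  have ht : Filter.Tendsto (fun n : ℕ => A * r ^ (n + 1)) Filter.atTop (nhds 0) := by
    have := (tendsto_pow_atTop_nhds_zero_of_lt_one hr0.le hr1).const_mul A
    simp at this
    exact this.comp (Filter.tendsto_add_atTop_nat 1)
  have hev : ∀ᶠ n : ℕ in Filter.atTop, A * r ^ (n + 1) ≤ 1/4 :=
    ht.eventually_le_const (by norm_num)
  filter_upwards [hev] with n hn
  push_cast
  have hpos : (0:ℝ) ≤ (n + 1 : ℝ) * A ^ n * r ^ (n * (n + 1) / 2) := by positivity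
  have hpos2 : (0:ℝ) ≤ (n + 1 + 1 : ℝ) * A ^ (n+1) * r ^ ((n+1) * ((n+1) + 1) / 2) := by
    positivity
  rw [Real.norm_of_nonneg hpos, Real.norm_of_nonneg hpos2]
  rw [tri_succ n, pow_add r (n*(n+1)/2) (n+1)]
  have hb : (n + 1 + 1 : ℝ) ≤ 2 * (n + 1) := by push_cast; linarith
  calc (n + 1 + 1 : ℝ) * A ^ (n + 1) * (r ^ (n * (n + 1) / 2) * r ^ (n + 1))
      = (n + 1 + 1 : ℝ) * (A * r ^ (n+1)) * (A ^ n * r ^ (n * (n + 1) / 2)) := by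
        rw [pow_succ]; ring
  _ ≤ (2 * (n + 1) : ℝ) * (1/4) * (A ^ n * r ^ (n * (n + 1) / 2)) := by
      refine mul_le_mul_of_nonneg_right ?_ (by positivity)
      refine mul_le_mul hb hn (by positivity) (by positivity)
  _ = 1/2 * ((n + 1 : ℝ) * A ^ n * r ^ (n * (n + 1) / 2)) := by ring

lemma aTerm_summable {q : ℂ} (hq0 : q ≠ 0) (hq : ‖q‖ < 1) (m : ℤ) :
    Summable (fun n => aTerm q m n) := by
  have hr0 : (0:ℝ) < ‖q‖ := norm_pos_iff.mpr hq0
  have h1r : (0:ℝ) < 1 - ‖q‖ := by linarith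
  set K : ℝ := 2 * |(m:ℝ)| + ‖Eone q‖ + 2 * ((1 + ‖q‖) / (1 - ‖q‖)) with hK
  set A : ℝ := ‖q‖ ^ (-|m|) * ((1 - ‖q‖) ^ 2)⁻¹ with hA
  have hA0 : (0:ℝ) ≤ A := by rw [hA]; positivity
  have hmaj : Summable (fun n : ℕ => K * ((n + 1 : ℝ) * A ^ n * ‖q‖ ^ (n * (n + 1) / 2))) :=
    (maj_summable hr0 hq hA0).mul_left K
  refine Summable.of_norm_bounded hmaj (fun n => ?_)
  rw [aTerm, norm_mul]
  calc ‖tTerm q m n‖ * ‖(2 * (m:ℂ) + Eone q + 2 * Sfun q n)‖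
      ≤ (A ^ n * ‖q‖ ^ (n * (n + 1) / 2)) * (K * (n + 1)) := by
        refine mul_le_mul (norm_t_le hq0 hq m n) (norm_s_le hq m n) (norm_nonneg _) ?_
        positivity
  _ = K * ((n + 1 : ℝ) * A ^ n * ‖q‖ ^ (n * (n + 1) / 2)) := by ring

lemma bSeq_tendsto {q : ℂ} (hq0 : q ≠ 0) (hq : ‖q‖ < 1) (m : ℤ) :
    Filter.Tendsto (bSeq q m) Filter.atTop (nhds 0) := by
  have h : Filter.Tendsto (fun n => bSeq q m (n+1)) Filter.atTop (nhds 0) := by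
    have heq : (fun n => bSeq q m (n+1)) = fun n => -q ^ m * aTerm q m n := rfl
    rw [heq]
    simpa using ((aTerm_summable hq0 hq m).tendsto_atTop_zero.const_mul (-q ^ m))
  exact (Filter.tendsto_add_atTop_iff_nat 1).mp h

set_option maxHeartbeats 1000000 in
lemma key_identity {q : ℂ} (hq0 : q ≠ 0) (hq : ‖q‖ < 1) (m : ℤ) (n : ℕ) :
    aTerm q (m+1) n - (2 - q ^ m) * aTerm q m n + aTerm q (m-1) n
      = bSeq q m n - bSeq q m (n+1) := by
  cases n with
  | zero =>
      simp only [aTerm, tTerm, bSeq, Sfun, qPoch, Finset.range_zero, Finset.prod_empty,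
        Nat.cast_zero, mul_zero, zpow_zero]
      norm_num
      push_cast
      ring
  | succ k =>
      have hP : qPoch q k ≠ 0 := qPoch_ne hq k
      have hQ : (1:ℂ) - q ^ (k+1) ≠ 0 := one_sub_pow_ne hq (k+1) (Nat.le_add_left 1 k)
      have hQ0 : q ^ (k+1) ≠ 0 := pow_ne_zero _ hq0
      have hZ1 : q ^ ((m+1) * ((k+1:ℕ):ℤ)) = q ^ (m * (k:ℤ)) * q ^ m * q ^ (k+1) := by
        rw [show (m+1) * ((k+1:ℕ):ℤ) = m*(k:ℤ) + m + ((k+1:ℕ):ℤ) by push_cast; ring,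
          zpow_add₀ hq0, zpow_add₀ hq0, zpow_natCast]
      have hZ0 : q ^ (m * ((k+1:ℕ):ℤ)) = q ^ (m * (k:ℤ)) * q ^ m := by
        rw [show m * ((k+1:ℕ):ℤ) = m*(k:ℤ) + m by push_cast; ring, zpow_add₀ hq0]
      have hW : q ^ ((m-1) * ((k+1:ℕ):ℤ)) = q ^ (m * (k:ℤ)) * q ^ m * (q ^ (k+1))⁻¹ := by
        rw [show (m-1) * ((k+1:ℕ):ℤ) = m*(k:ℤ) + m + (-((k+1:ℕ):ℤ)) by push_cast; ring,
          zpow_add₀ hq0, zpow_add₀ hq0, zpow_neg, zpow_natCast]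
      have e1 : aTerm q (m+1) (k+1)
          = -((-1:ℂ)^k * q ^ (k*(k+1)/2) * q ^ (m*(k:ℤ)) * q ^ m) * (q^(k+1))^2 *
              ((2*(m:ℂ)+2+Eone q+2*Sfun q k) * (1-q^(k+1)) + 2*(1+q^(k+1)))
            / ((qPoch q k)^2 * (1-q^(k+1))^3) := by
        rw [aTerm, tTerm, qPoch_succ, Sfun_succ, tri_succ, pow_add q (k*(k+1)/2) (k+1),
          pow_succ (-1:ℂ) k, hZ1]
        push_cast
        field_simp
        ring
      have e2 : aTerm q m (k+1)
          = -((-1:ℂ)^k * q ^ (k*(k+1)/2) * q ^ (m*(k:ℤ)) * q ^ m) * (q^(k+1)) *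
              ((2*(m:ℂ)+Eone q+2*Sfun q k) * (1-q^(k+1)) + 2*(1+q^(k+1)))
            / ((qPoch q k)^2 * (1-q^(k+1))^3) := by
        rw [aTerm, tTerm, qPoch_succ, Sfun_succ, tri_succ, pow_add q (k*(k+1)/2) (k+1),
          pow_succ (-1:ℂ) k, hZ0]
        push_cast
        field_simp
        ring
      have e3 : aTerm q (m-1) (k+1)
          = -((-1:ℂ)^k * q ^ (k*(k+1)/2) * q ^ (m*(k:ℤ)) * q ^ m) *
              ((2*(m:ℂ)-2+Eone q+2*Sfun q k) * (1-q^(k+1)) + 2*(1+q^(k+1)))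
            / ((qPoch q k)^2 * (1-q^(k+1))^3) := by
        rw [aTerm, tTerm, qPoch_succ, Sfun_succ, tri_succ, pow_add q (k*(k+1)/2) (k+1),
          pow_succ (-1:ℂ) k, hW]
        push_cast
        field_simp
        ring
      have e4 : bSeq q m (k+1)
          = -q^m * ((-1:ℂ)^k * q ^ (k*(k+1)/2) * q ^ (m*(k:ℤ)) / (qPoch q k)^2 *
              (2*(m:ℂ) + Eone q + 2*Sfun q k)) := rfl
      have e5 : bSeq q m (k+1+1) = -q^m * aTerm q m (k+1) := rfl
      have e4' : bSeq q m (k+1)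
          = (-q^m * ((-1:ℂ)^k * q ^ (k*(k+1)/2) * q ^ (m*(k:ℤ)) *
              (2*(m:ℂ) + Eone q + 2*Sfun q k)) * (1-q^(k+1))^3)
            / ((qPoch q k)^2 * (1-q^(k+1))^3) := by
        rw [e4]
        field_simp
      have hD : (qPoch q k)^2 * (1-q^(k+1))^3 ≠ 0 :=
        mul_ne_zero (pow_ne_zero _ hP) (pow_ne_zero _ hQ)
      rw [e5, e4', e1, e2, e3]
      simp only [← mul_div_assoc, ← neg_div, ← sub_div, ← add_div]
      rw [div_eq_div_iff hD hD]
      ring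

theorem stmt_7 (q : ℂ) (hq0 : q ≠ 0) (hq : ‖q‖ < 1) (m : ℤ) :
    G1 q (m + 1) - (2 - q ^ m) * G1 q m + G1 q (m - 1) = 0 := by
  have hs1 := aTerm_summable hq0 hq (m+1)
  have hs2 := (aTerm_summable hq0 hq m).mul_left (2 - q ^ m)
  have hs3 := aTerm_summable hq0 hq (m-1)
  have hw : Summable (fun n => aTerm q (m+1) n - (2 - q ^ m) * aTerm q m n + aTerm q (m-1) n) :=
    (hs1.sub hs2).add hs3
  have hsplit : G1 q (m + 1) - (2 - q ^ m) * G1 q m + G1 q (m - 1)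
      = ∑' n : ℕ, (aTerm q (m+1) n - (2 - q ^ m) * aTerm q m n + aTerm q (m-1) n) := by
    rw [Summable.tsum_add (hs1.sub hs2) hs3, Summable.tsum_sub hs1 hs2, tsum_mul_left]
    simp [G1_eq]
  rw [hsplit]
  have h0 : HasSum (fun n => aTerm q (m+1) n - (2 - q ^ m) * aTerm q m n + aTerm q (m-1) n) 0 := by
    rw [hw.hasSum_iff_tendsto_nat]
    have heq : ∀ N : ℕ, ∑ i ∈ Finset.range N,
        (aTerm q (m+1) i - (2 - q ^ m) * aTerm q m i + aTerm q (m-1) i)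
        = bSeq q m 0 - bSeq q m N := by
      intro N
      rw [← Finset.sum_range_sub' (bSeq q m) N]
      exact Finset.sum_congr rfl (fun i _ => key_identity hq0 hq m i)
    simp only [heq, show bSeq q m 0 = (0:ℂ) from rfl, zero_sub]
    simpa using (bSeq_tendsto hq0 hq m).neg
  rw [h0.tsum_eq]
end

section
/- Let W_m(q) = [[G^0_m(q), G^1_m(q)],[G^0_{m+1}(q), G^1_{m+1}(q)]] with G^0_m, G^1_m as above for |q|<1. Then \det(W_m(q)) = 2 for all m \in \mathbb{Z}. -/
open Filter Finset

/-- `G⁰_m(q)`. -/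
noncomputable def G0 (q : ℂ) (m : ℤ) : ℂ :=
  ∑' n : ℕ, (-1 : ℂ) ^ n * q ^ (n * (n + 1) / 2) * q ^ (m * (n : ℤ)) / (qPoch q n) ^ 2

/-- The Wronskian matrix `W_m(q)`. -/
noncomputable def Wm (q : ℂ) (m : ℤ) : Matrix (Fin 2) (Fin 2) ℂ :=
  !![G0 q m, G1 q m; G0 q (m + 1), G1 q (m + 1)]

namespace StmtAux

variable {q : ℂ}

noncomputable def t (q : ℂ) (m : ℤ) (n : ℕ) : ℂ :=
  (-1 : ℂ) ^ n * q ^ (n * (n + 1) / 2) * q ^ (m * (n : ℤ)) / (qPoch q n) ^ 2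

noncomputable def cf (q : ℂ) (m : ℤ) (n : ℕ) : ℂ :=
  2 * (m : ℂ) + Eone q + 2 * ∑ j ∈ Finset.Icc 1 n, (1 + q ^ j) / (1 - q ^ j)

lemma G0_eq (m : ℤ) : G0 q m = ∑' n : ℕ, t q m n := rfl

lemma G1_eq' (m : ℤ) : G1 q m = ∑' n : ℕ, t q m n * cf q m n := rfl

lemma Tsucc (n : ℕ) : (n+1) * (n + 1 + 1) / 2 = n * (n+1)/2 + (n+1) := by
  have h : 2 ∣ n * (n+1) := (Nat.even_mul_succ_self n).two_dvd
  have h2 : 2 ∣ (n+1) * (n+1+1) := (Nat.even_mul_succ_self (n+1)).two_dvd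
  have h3 : (n+1)*(n+1+1) = n*(n+1) + 2*(n+1) := by ring
  omega

lemma one_sub_pow_ne (hq : ‖q‖ < 1) (n : ℕ) : 1 - q ^ (n + 1) ≠ 0 := by
  intro h
  have h1 : q ^ (n + 1) = 1 := by linear_combination -h
  have h2 : ‖q ^ (n+1)‖ < 1 := by
    rw [norm_pow]
    exact pow_lt_one₀ (norm_nonneg q) hq (Nat.succ_ne_zero n)
  rw [h1, norm_one] at h2
  exact lt_irrefl 1 h2

lemma qPoch_ne_zero (hq : ‖q‖ < 1) (n : ℕ) : qPoch q n ≠ 0 := by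
  unfold qPoch
  exact Finset.prod_ne_zero_iff.2 fun j _ => one_sub_pow_ne hq j

lemma norm_one_sub_pow_ge (hq : ‖q‖ < 1) (n : ℕ) : 1 - ‖q‖ ≤ ‖1 - q ^ (n + 1)‖ := by
  have h1 : ‖(1:ℂ)‖ - ‖q ^ (n+1)‖ ≤ ‖1 - q ^ (n + 1)‖ := norm_sub_norm_le _ _
  rw [norm_one, norm_pow] at h1
  have h2 : ‖q‖ ^ (n + 1) ≤ ‖q‖ := pow_le_of_le_one (norm_nonneg q) hq.le (Nat.succ_ne_zero n)
  linarith

lemma norm_qPoch_ge (hq : ‖q‖ < 1) (n : ℕ) : (1 - ‖q‖) ^ n ≤ ‖qPoch q n‖ := by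
  unfold qPoch
  rw [norm_prod]
  calc (1 - ‖q‖) ^ n = ∏ _j ∈ Finset.range n, (1 - ‖q‖) := by
        rw [Finset.prod_const, Finset.card_range]
    _ ≤ ∏ j ∈ Finset.range n, ‖1 - q ^ (j + 1)‖ :=
        Finset.prod_le_prod (fun j _ => by linarith [hq]) (fun j _ => norm_one_sub_pow_ge hq j)

lemma norm_t_le (hq0 : q ≠ 0) (hq : ‖q‖ < 1) (m : ℤ) (n : ℕ) :
    ‖t q m n‖ ≤ ‖q‖ ^ (n * (n + 1) / 2) * (‖q‖ ^ m / (1 - ‖q‖) ^ 2) ^ n := by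
  have hc : (0:ℝ) < 1 - ‖q‖ := by linarith
  have hp : (0:ℝ) < (1 - ‖q‖) ^ n := pow_pos hc n
  have hnt : ‖t q m n‖ = ‖q‖ ^ (n * (n + 1) / 2) * (‖q‖ ^ m) ^ n / ‖qPoch q n‖ ^ 2 := by
    unfold t
    rw [norm_div, norm_pow, norm_mul, norm_mul, norm_pow, norm_pow, norm_neg, norm_one,
      one_pow, one_mul, norm_zpow, ← zpow_natCast (‖q‖ ^ m) n, ← zpow_mul]
  rw [hnt]
  have hb : ((1 - ‖q‖) ^ n) ^ 2 ≤ ‖qPoch q n‖ ^ 2 := by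
    nlinarith [norm_qPoch_ge hq n, pow_pos hc n]
  have hnum : (0:ℝ) ≤ ‖q‖ ^ (n * (n + 1) / 2) * (‖q‖ ^ m) ^ n := by positivity
  calc ‖q‖ ^ (n * (n + 1) / 2) * (‖q‖ ^ m) ^ n / ‖qPoch q n‖ ^ 2
      ≤ ‖q‖ ^ (n * (n + 1) / 2) * (‖q‖ ^ m) ^ n / ((1 - ‖q‖) ^ n) ^ 2 := by
        apply div_le_div_of_nonneg_left hnum (by positivity) hb
    _ = ‖q‖ ^ (n * (n + 1) / 2) * (‖q‖ ^ m / (1 - ‖q‖) ^ 2) ^ n := by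
        rw [div_pow, ← pow_mul, ← pow_mul, mul_comm 2 n, pow_mul]
        ring

/-- majorant summability -/
lemma summable_maj (hq0 : q ≠ 0) (hq : ‖q‖ < 1) (s K B : ℝ) (hs : 0 < s) (hK : 0 < K)
    (hB : 0 ≤ B) :
    Summable (fun n : ℕ => (K + B * n) * (‖q‖ ^ (n * (n + 1) / 2) * s ^ n)) := by
  have hr0 : 0 < ‖q‖ := norm_pos_iff.2 hq0
  apply summable_of_ratio_norm_eventually_le (r := 1/2) (by norm_num)
  have hto : Tendsto (fun n : ℕ => ‖q‖ ^ n) atTop (nhds 0) :=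
    tendsto_pow_atTop_nhds_zero_of_lt_one (norm_nonneg q) hq
  have hev : ∀ᶠ n : ℕ in atTop, ‖q‖ ^ (n + 1) * s * ((K + B) / K) ≤ 1/2 := by
    have h : Tendsto (fun n : ℕ => ‖q‖ ^ (n+1) * s * ((K + B)/K)) atTop
        (nhds (0 * s * ((K+B)/K))) := by
      apply Tendsto.mul_const
      apply Tendsto.mul_const
      exact hto.comp (tendsto_add_atTop_nat 1)
    rw [zero_mul, zero_mul] at h
    exact h.eventually_le_const (by norm_num)
  filter_upwards [hev] with n hn
  have hmajn : (0:ℝ) ≤ (K + B * n) * (‖q‖ ^ (n * (n + 1) / 2) * s ^ n) := by positivity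
  have hKn : (0:ℝ) < K + B * n := by positivity
  rw [Real.norm_of_nonneg (by positivity), Real.norm_of_nonneg hmajn]
  have hlin : K + B * (n+1:ℕ) ≤ (K + B * n) * ((K + B)/K) := by
    rw [← sub_nonneg]
    have heq : (K + B * n) * ((K + B) / K) - (K + B * (n+1:ℕ)) = (B^2 * n) / K := by
      push_cast; field_simp; ring
    rw [heq]; positivity
  calc (K + B * (n+1:ℕ)) * (‖q‖ ^ ((n+1) * (n + 1 + 1) / 2) * s ^ (n+1))
      = (K + B * (n+1:ℕ)) * (‖q‖ ^ (n * (n+1)/2) * s ^ n) * (‖q‖ ^ (n+1) * s) := by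
        rw [Tsucc n, pow_add]
        ring
    _ ≤ (K + B * n) * ((K + B)/K) * (‖q‖ ^ (n * (n+1)/2) * s ^ n) * (‖q‖ ^ (n+1) * s) := by
        apply mul_le_mul_of_nonneg_right _ (by positivity)
        exact mul_le_mul_of_nonneg_right hlin (by positivity)
    _ = (‖q‖ ^ (n+1) * s * ((K + B)/K)) * ((K + B * n) * (‖q‖ ^ (n * (n+1)/2) * s ^ n)) := by ring
    _ ≤ 1/2 * ((K + B * n) * (‖q‖ ^ (n * (n+1)/2) * s ^ n)) :=
        mul_le_mul_of_nonneg_right hn (by positivity)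

/-- master summability lemma -/
lemma summable_t_mul (hq0 : q ≠ 0) (hq : ‖q‖ < 1) (m : ℤ) (P : ℕ → ℂ) (K B : ℝ)
    (hK : 0 < K) (hB : 0 ≤ B) (hP : ∀ n, ‖P n‖ ≤ K + B * n) :
    Summable (fun n => t q m n * P n) := by
  have hc : (0:ℝ) < 1 - ‖q‖ := by linarith
  have hr0 : 0 < ‖q‖ := norm_pos_iff.2 hq0
  apply Summable.of_norm_bounded (summable_maj hq0 hq (‖q‖ ^ m / (1 - ‖q‖)^2) K B
    (by positivity) hK hB)
  intro n
  rw [norm_mul]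
  calc ‖t q m n‖ * ‖P n‖
      ≤ (‖q‖ ^ (n * (n + 1) / 2) * (‖q‖ ^ m / (1 - ‖q‖) ^ 2) ^ n) * (K + B*n) :=
        mul_le_mul (norm_t_le hq0 hq m n) (hP n) (norm_nonneg _) (by positivity)
    _ = (K + B * n) * (‖q‖ ^ (n * (n + 1) / 2) * (‖q‖ ^ m / (1 - ‖q‖) ^ 2) ^ n) := by ring

lemma summable_t (hq0 : q ≠ 0) (hq : ‖q‖ < 1) (m : ℤ) : Summable (t q m) := by
  have h := summable_t_mul hq0 hq m (fun _ => 1) 1 0 one_pos le_rfl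
    (fun n => by simp)
  simpa using h

lemma norm_cf_le (hq : ‖q‖ < 1) (m : ℤ) (n : ℕ) :
    ‖cf q m n‖ ≤ (2 * |(m:ℝ)| + ‖Eone q‖ + 1) + (2 * (1 + ‖q‖) / (1 - ‖q‖)) * n := by
  have hc : (0:ℝ) < 1 - ‖q‖ := by linarith
  have hterm : ∀ j ∈ Finset.Icc 1 n, ‖(1 + q ^ j) / (1 - q ^ j)‖ ≤ (1 + ‖q‖) / (1 - ‖q‖) := by
    intro j hj
    have h1j : 1 ≤ j := (Finset.mem_Icc.1 hj).1
    obtain ⟨j', rfl⟩ : ∃ j', j = j' + 1 := ⟨j - 1, by omega⟩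
    rw [norm_div]
    apply div_le_div₀ (by positivity) _ hc (norm_one_sub_pow_ge hq j')
    calc ‖1 + q ^ (j'+1)‖ ≤ ‖(1:ℂ)‖ + ‖q ^ (j'+1)‖ := norm_add_le _ _
      _ = 1 + ‖q‖ ^ (j'+1) := by rw [norm_one, norm_pow]
      _ ≤ 1 + ‖q‖ := by
          have h4 : ‖q‖ ^ (j' + 1) ≤ ‖q‖ :=
            pow_le_of_le_one (norm_nonneg q) hq.le (Nat.succ_ne_zero j')
          linarith
  have hsum : ‖∑ j ∈ Finset.Icc 1 n, (1 + q ^ j) / (1 - q ^ j)‖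
      ≤ (n : ℝ) * ((1 + ‖q‖) / (1 - ‖q‖)) := by
    calc ‖∑ j ∈ Finset.Icc 1 n, (1 + q ^ j) / (1 - q ^ j)‖
        ≤ ∑ j ∈ Finset.Icc 1 n, ‖(1 + q ^ j) / (1 - q ^ j)‖ := norm_sum_le _ _
      _ ≤ ∑ _j ∈ Finset.Icc 1 n, (1 + ‖q‖) / (1 - ‖q‖) := Finset.sum_le_sum hterm
      _ = (n : ℝ) * ((1 + ‖q‖) / (1 - ‖q‖)) := by
          rw [Finset.sum_const, Nat.card_Icc]
          simp [nsmul_eq_mul]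
  have h1 : ‖cf q m n‖ ≤ 2 * |(m:ℝ)| + ‖Eone q‖
      + 2 * ((n:ℝ) * ((1 + ‖q‖) / (1 - ‖q‖))) := by
    unfold cf
    calc ‖2 * (m : ℂ) + Eone q + 2 * ∑ j ∈ Finset.Icc 1 n, (1 + q ^ j) / (1 - q ^ j)‖
        ≤ ‖2 * (m : ℂ) + Eone q‖ + ‖2 * ∑ j ∈ Finset.Icc 1 n, (1 + q ^ j) / (1 - q ^ j)‖ :=
          norm_add_le _ _
      _ ≤ (‖2 * (m : ℂ)‖ + ‖Eone q‖) + ‖(2:ℂ)‖ * ‖∑ j ∈ Finset.Icc 1 n, (1 + q ^ j) / (1 - q ^ j)‖ := by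
          rw [norm_mul]
          exact add_le_add (norm_add_le _ _) le_rfl
      _ ≤ 2 * |(m:ℝ)| + ‖Eone q‖ + 2 * ((n:ℝ) * ((1 + ‖q‖) / (1 - ‖q‖))) := by
          have h2 : ‖(2:ℂ)‖ = 2 := by norm_num
          have h3 : ‖2 * (m:ℂ)‖ = 2 * |(m:ℝ)| := by
            rw [norm_mul, h2]
            congr 1
            rw [show ((m:ℂ)) = ((m:ℝ):ℂ) by push_cast; ring, Complex.norm_real,
              Real.norm_eq_abs]
          rw [h2, h3]
          have := mul_le_mul_of_nonneg_left hsum (by norm_num : (0:ℝ) ≤ 2)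
          linarith
  calc ‖cf q m n‖ ≤ 2 * |(m:ℝ)| + ‖Eone q‖ + 2 * ((n:ℝ) * ((1 + ‖q‖) / (1 - ‖q‖))) := h1
    _ ≤ (2 * |(m:ℝ)| + ‖Eone q‖ + 1) + (2 * (1 + ‖q‖) / (1 - ‖q‖)) * n := by
        have hn : (0:ℝ) ≤ (n:ℝ) := Nat.cast_nonneg n
        have : 2 * ((n:ℝ) * ((1 + ‖q‖) / (1 - ‖q‖))) = (2 * (1 + ‖q‖) / (1 - ‖q‖)) * n := by
          field_simp
        linarith [this.le, this.ge]

lemma summable_tcf (hq0 : q ≠ 0) (hq : ‖q‖ < 1) (m m' : ℤ) :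
    Summable (fun n => t q m n * cf q m' n) := by
  have hc : (0:ℝ) < 1 - ‖q‖ := by linarith
  exact summable_t_mul hq0 hq m (cf q m') (2 * |(m':ℝ)| + ‖Eone q‖ + 1)
    (2 * (1 + ‖q‖) / (1 - ‖q‖)) (by positivity) (by positivity) (norm_cf_le hq m')

lemma t_zero (m : ℤ) : t q m 0 = 1 := by
  simp [t, qPoch]

lemma t_shift1 (hq0 : q ≠ 0) (m : ℤ) (n : ℕ) : t q (m+1) n = t q m n * q ^ n := by
  unfold t
  rw [show (m+1) * (n:ℤ) = m * n + n by ring, zpow_add₀ hq0, zpow_natCast]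
  ring

lemma t_shift2 (hq0 : q ≠ 0) (m : ℤ) (n : ℕ) : t q (m+2) n = t q m n * q ^ n * q ^ n := by
  have h : (m : ℤ) + 2 = (m + 1) + 1 := by ring
  rw [h, t_shift1 hq0, t_shift1 hq0]

lemma qPoch_succ (n : ℕ) : qPoch q (n+1) = qPoch q n * (1 - q ^ (n+1)) := by
  unfold qPoch
  rw [Finset.prod_range_succ]

lemma t_succ (hq0 : q ≠ 0) (hq : ‖q‖ < 1) (m : ℤ) (n : ℕ) :
    t q m (n+1) = -(q ^ (m : ℤ) * q ^ (n+1) * t q m n) / (1 - q ^ (n+1))^2 := by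
  unfold t
  rw [qPoch_succ, Tsucc n, pow_add,
    show m * (((n:ℕ)+1 : ℕ) : ℤ) = m * n + m by push_cast; ring, zpow_add₀ hq0]
  have h1 : qPoch q n ≠ 0 := qPoch_ne_zero hq n
  have h2 : 1 - q ^ (n+1) ≠ 0 := one_sub_pow_ne hq n
  field_simp
  ring

lemma cf_shift1 (m : ℤ) (n : ℕ) : cf q (m+1) n = cf q m n + 2 := by
  unfold cf; push_cast; ring

lemma cf_shift2 (m : ℤ) (n : ℕ) : cf q (m+2) n = cf q m n + 4 := by
  unfold cf; push_cast; ring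

lemma cf_succ (m : ℤ) (n : ℕ) :
    cf q m (n+1) = cf q m n + 2 * ((1 + q ^ (n+1)) / (1 - q ^ (n+1))) := by
  unfold cf
  rw [Finset.sum_Icc_succ_top (Nat.succ_le_succ (Nat.zero_le n))]
  ring

lemma rec0_pointwise (hq0 : q ≠ 0) (hq : ‖q‖ < 1) (m : ℤ) (n : ℕ) :
    t q m n + t q (m+2) n - (2 - q ^ ((m:ℤ)+1)) * t q (m+1) n
    = t q m n * (1 - q ^ n)^2 - t q m (n+1) * (1 - q ^ (n+1))^2 := by
  have hy : (1 : ℂ) - q ^ (n+1) ≠ 0 := one_sub_pow_ne hq n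
  rw [t_shift2 hq0, t_shift1 hq0, t_succ hq0 hq, zpow_add_one₀ hq0, pow_succ]
  field_simp
  ring

lemma rec1_pointwise (hq0 : q ≠ 0) (hq : ‖q‖ < 1) (m : ℤ) (n : ℕ) :
    t q m n * cf q m n + t q (m+2) n * cf q (m+2) n
      - (2 - q ^ ((m:ℤ)+1)) * (t q (m+1) n * cf q (m+1) n)
    = (t q m n * cf q m n * (1 - q ^ n)^2 + 4 * t q m n * q ^ n * (q ^ n - 1))
      - (t q m (n+1) * cf q m (n+1) * (1 - q ^ (n+1))^2
         + 4 * t q m (n+1) * q ^ (n+1) * (q ^ (n+1) - 1)) := by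
  have hy : (1 : ℂ) - q ^ (n+1) ≠ 0 := one_sub_pow_ne hq n
  rw [t_shift2 hq0, t_shift1 hq0, t_succ hq0 hq, cf_shift1, cf_shift2, cf_succ,
    zpow_add_one₀ hq0, pow_succ]
  field_simp
  ring

lemma tsum_telescope (g : ℕ → ℂ) (hg : Summable g) :
    ∑' n : ℕ, (g n - g (n+1)) = g 0 := by
  have h1 : Summable (fun n => g (n+1)) := (summable_nat_add_iff 1).2 hg
  rw [Summable.tsum_sub hg h1, Summable.tsum_eq_zero_add hg]
  ring

/-- summability of the telescoping function for `rec0` -/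
lemma summable_g0 (hq0 : q ≠ 0) (hq : ‖q‖ < 1) (m : ℤ) :
    Summable (fun n => t q m n * (1 - q ^ n)^2) := by
  apply summable_t_mul hq0 hq m _ 4 0 (by norm_num) le_rfl
  intro n
  have h1 : ‖(1:ℂ) - q ^ n‖ ≤ 2 := by
    calc ‖(1:ℂ) - q ^ n‖ ≤ ‖(1:ℂ)‖ + ‖q ^ n‖ := norm_sub_le _ _
      _ ≤ 1 + 1 := by
          rw [norm_one, norm_pow]
          have := pow_le_one₀ (norm_nonneg q) hq.le (n := n)
          linarith
      _ = 2 := by norm_num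
  calc ‖((1:ℂ) - q ^ n)^2‖ = ‖(1:ℂ) - q ^ n‖^2 := norm_pow _ _
    _ ≤ 2^2 := by nlinarith [norm_nonneg ((1:ℂ) - q ^ n)]
    _ ≤ 4 + 0 * n := by norm_num

/-- summability of the telescoping function for `rec1` -/
lemma summable_g1 (hq0 : q ≠ 0) (hq : ‖q‖ < 1) (m : ℤ) :
    Summable (fun n => t q m n * cf q m n * (1 - q ^ n)^2
      + 4 * t q m n * q ^ n * (q ^ n - 1)) := by
  have hc : (0:ℝ) < 1 - ‖q‖ := by linarith
  set K := 2 * |(m:ℝ)| + ‖Eone q‖ + 1 with hKdef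
  set B := 2 * (1 + ‖q‖) / (1 - ‖q‖) with hBdef
  have hK : (0:ℝ) < K := by rw [hKdef]; positivity
  have hB : (0:ℝ) ≤ B := by rw [hBdef]; positivity
  have h := summable_t_mul hq0 hq m
    (fun n => cf q m n * (1 - q ^ n)^2 + 4 * q ^ n * (q ^ n - 1)) (4*K + 8) (4*B)
    (by positivity) (by positivity) ?_
  · apply h.congr
    intro n
    ring
  · intro n
    have hqn : ‖q ^ n‖ ≤ 1 := by
      rw [norm_pow]; exact pow_le_one₀ (norm_nonneg q) hq.le
    have h1 : ‖(1:ℂ) - q ^ n‖ ≤ 2 := by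
      calc ‖(1:ℂ) - q ^ n‖ ≤ ‖(1:ℂ)‖ + ‖q ^ n‖ := norm_sub_le _ _
        _ ≤ 2 := by rw [norm_one]; linarith
    have h2 : ‖q ^ n - 1‖ ≤ 2 := by
      calc ‖q ^ n - (1:ℂ)‖ ≤ ‖q ^ n‖ + ‖(1:ℂ)‖ := norm_sub_le _ _
        _ ≤ 2 := by rw [norm_one]; linarith
    have hcf := norm_cf_le hq m n
    calc ‖cf q m n * (1 - q ^ n)^2 + 4 * q ^ n * (q ^ n - 1)‖
        ≤ ‖cf q m n * (1 - q ^ n)^2‖ + ‖4 * q ^ n * (q ^ n - 1)‖ := norm_add_le _ _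
      _ = ‖cf q m n‖ * ‖(1 - q ^ n)‖^2 + 4 * ‖q ^ n‖ * ‖q ^ n - 1‖ := by
          rw [norm_mul, norm_mul, norm_mul, norm_pow]
          norm_num
      _ ≤ (K + B * n) * 4 + 4 * 1 * 2 := by
          have hnn : (0:ℝ) ≤ ‖cf q m n‖ := norm_nonneg _
          have h3 : ‖(1:ℂ) - q ^ n‖^2 ≤ 4 := by nlinarith [norm_nonneg ((1:ℂ) - q ^ n)]
          have h4 : ‖cf q m n‖ * ‖(1 - q ^ n)‖^2 ≤ (K + B * n) * 4 := by
            apply mul_le_mul hcf h3 (by positivity) (by positivity)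
          have h5 : 4 * ‖q ^ n‖ * ‖q ^ n - 1‖ ≤ 4 * 1 * 2 := by
            apply mul_le_mul _ h2 (norm_nonneg _) (by norm_num)
            linarith
          linarith
      _ ≤ (4*K + 8) + (4*B) * n := by
          have hn : (0:ℝ) ≤ (n:ℝ) := Nat.cast_nonneg n
          nlinarith [hK, hB]

lemma rec0 (hq0 : q ≠ 0) (hq : ‖q‖ < 1) (m : ℤ) :
    G0 q m + G0 q (m+2) = (2 - q ^ ((m:ℤ)+1)) * G0 q (m+1) := by
  have hs1 : Summable (t q m) := summable_t hq0 hq m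
  have hs2 : Summable (t q (m+2)) := summable_t hq0 hq (m+2)
  have hs3 : Summable (fun n => (2 - q ^ ((m:ℤ)+1)) * t q (m+1) n) :=
    (summable_t hq0 hq (m+1)).mul_left _
  have key : G0 q m + G0 q (m+2) - (2 - q ^ ((m:ℤ)+1)) * G0 q (m+1)
      = ∑' n : ℕ, (t q m n + t q (m+2) n - (2 - q ^ ((m:ℤ)+1)) * t q (m+1) n) := by
    rw [G0_eq, G0_eq, G0_eq, ← tsum_mul_left, ← Summable.tsum_add hs1 hs2,
      ← Summable.tsum_sub (hs1.add hs2) hs3]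
  have key2 : G0 q m + G0 q (m+2) - (2 - q ^ ((m:ℤ)+1)) * G0 q (m+1) = 0 := by
    rw [key, tsum_congr (rec0_pointwise hq0 hq m), tsum_telescope _ (summable_g0 hq0 hq m),
      t_zero]
    simp
  linear_combination key2

lemma rec1 (hq0 : q ≠ 0) (hq : ‖q‖ < 1) (m : ℤ) :
    G1 q m + G1 q (m+2) = (2 - q ^ ((m:ℤ)+1)) * G1 q (m+1) := by
  have hs1 : Summable (fun n => t q m n * cf q m n) := summable_tcf hq0 hq m m
  have hs2 : Summable (fun n => t q (m+2) n * cf q (m+2) n) := summable_tcf hq0 hq (m+2) (m+2)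
  have hs3 : Summable (fun n => (2 - q ^ ((m:ℤ)+1)) * (t q (m+1) n * cf q (m+1) n)) :=
    (summable_tcf hq0 hq (m+1) (m+1)).mul_left _
  have key : G1 q m + G1 q (m+2) - (2 - q ^ ((m:ℤ)+1)) * G1 q (m+1)
      = ∑' n : ℕ, (t q m n * cf q m n + t q (m+2) n * cf q (m+2) n
          - (2 - q ^ ((m:ℤ)+1)) * (t q (m+1) n * cf q (m+1) n)) := by
    rw [G1_eq', G1_eq', G1_eq', ← tsum_mul_left, ← Summable.tsum_add hs1 hs2,
      ← Summable.tsum_sub (hs1.add hs2) hs3]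
  have key2 : G1 q m + G1 q (m+2) - (2 - q ^ ((m:ℤ)+1)) * G1 q (m+1) = 0 := by
    rw [key, tsum_congr (rec1_pointwise hq0 hq m), tsum_telescope _ (summable_g1 hq0 hq m),
      t_zero]
    simp [cf]
  linear_combination key2

/-- the determinant -/
noncomputable def D (q : ℂ) (m : ℤ) : ℂ := G0 q m * G1 q (m+1) - G1 q m * G0 q (m+1)

lemma D_succ (hq0 : q ≠ 0) (hq : ‖q‖ < 1) (m : ℤ) : D q (m+1) = D q m := by
  have h0 := rec0 hq0 hq m
  have h1 := rec1 hq0 hq m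
  unfold D
  rw [show (m:ℤ)+1+1 = m+2 by ring]
  have e0 : G0 q (m+2) = (2 - q ^ ((m:ℤ)+1)) * G0 q (m+1) - G0 q m := by
    linear_combination h0
  have e1 : G1 q (m+2) = (2 - q ^ ((m:ℤ)+1)) * G1 q (m+1) - G1 q m := by
    linear_combination h1
  rw [e0, e1]
  ring

lemma D_add (hq0 : q ≠ 0) (hq : ‖q‖ < 1) (m : ℤ) (k : ℕ) : D q (m + k) = D q m := by
  induction k with
  | zero => simp
  | succ k ih =>
      rw [show (m + ((k:ℕ)+1:ℕ) : ℤ) = (m + k) + 1 by push_cast; ring,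
        D_succ hq0 hq (m + k), ih]

lemma t_shift_nat (hq0 : q ≠ 0) (m : ℤ) (k n : ℕ) :
    t q (m + k) n = t q m n * (q ^ n) ^ k := by
  induction k with
  | zero => simp
  | succ k ih =>
      rw [show (m + ((k:ℕ)+1:ℕ) : ℤ) = (m + k) + 1 by push_cast; ring,
        t_shift1 hq0, ih, pow_succ]
      ring

/-- the series `H_m = ∑ t_{m,n} (E₁ + 2 Σ_j ...)` -/
noncomputable def H (q : ℂ) (m : ℤ) : ℂ := ∑' n : ℕ, t q m n * cf q 0 n

lemma cf_eq (m : ℤ) (n : ℕ) : cf q m n = 2 * (m:ℂ) + cf q 0 n := by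
  unfold cf; push_cast; ring

lemma G1_split (hq0 : q ≠ 0) (hq : ‖q‖ < 1) (m : ℤ) :
    G1 q m = 2 * (m:ℂ) * G0 q m + H q m := by
  rw [G1_eq', G0_eq, H]
  have hs1 : Summable (fun n => 2 * (m:ℂ) * t q m n) := (summable_t hq0 hq m).mul_left _
  have hs2 : Summable (fun n => t q m n * cf q 0 n) := summable_tcf hq0 hq m 0
  calc ∑' n : ℕ, t q m n * cf q m n
      = ∑' n : ℕ, (2 * (m:ℂ) * t q m n + t q m n * cf q 0 n) := by
        apply tsum_congr
        intro n
        rw [cf_eq]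
        ring
    _ = 2 * (m:ℂ) * ∑' n : ℕ, t q m n + ∑' n : ℕ, t q m n * cf q 0 n := by
        rw [Summable.tsum_add hs1 hs2, tsum_mul_left]

lemma D_eq (hq0 : q ≠ 0) (hq : ‖q‖ < 1) (m : ℤ) :
    D q m = 2 * G0 q m * G0 q (m+1) + G0 q m * H q (m+1) - H q m * G0 q (m+1) := by
  unfold D
  rw [G1_split hq0 hq m, G1_split hq0 hq (m+1)]
  push_cast
  ring

set_option maxHeartbeats 1000000 in
lemma tendsto_tail (hq0 : q ≠ 0) (hq : ‖q‖ < 1) (P : ℕ → ℂ)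
    (hsum : ∀ m' : ℤ, Summable (fun n => t q m' n * P n)) (m0 : ℤ) :
    Tendsto (fun k : ℕ => ∑' n : ℕ, t q (m0 + k) (n+1) * P (n+1)) atTop (nhds 0) := by
  set C := ∑' n : ℕ, ‖t q m0 (n+1) * P (n+1)‖ with hC
  have hCs : Summable (fun n : ℕ => ‖t q m0 (n+1) * P (n+1)‖) :=
    summable_norm_iff.mpr ((summable_nat_add_iff 1).2 (hsum m0))
  apply squeeze_zero_norm' (a := fun k : ℕ => C * ‖q‖ ^ k)
  · apply Eventually.of_forall
    intro k
    have hCsk : Summable (fun n : ℕ => ‖t q (m0 + k) (n+1) * P (n+1)‖) :=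
      summable_norm_iff.mpr ((summable_nat_add_iff 1).2 (hsum (m0 + k)))
    have hterm : ∀ n : ℕ, ‖t q (m0 + k) (n+1) * P (n+1)‖
        ≤ ‖t q m0 (n+1) * P (n+1)‖ * ‖q‖ ^ k := by
      intro n
      rw [show t q (m0 + k) (n+1) * P (n+1)
          = (t q m0 (n+1) * P (n+1)) * (q ^ (n+1)) ^ k by rw [t_shift_nat hq0]; ring,
        norm_mul]
      apply mul_le_mul_of_nonneg_left _ (norm_nonneg _)
      rw [norm_pow, norm_pow]
      exact pow_le_pow_left₀ (by positivity)
        (pow_le_of_le_one (norm_nonneg q) hq.le (Nat.succ_ne_zero n)) k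
    calc ‖∑' n : ℕ, t q (m0 + k) (n+1) * P (n+1)‖
        ≤ ∑' n : ℕ, ‖t q (m0 + k) (n+1) * P (n+1)‖ := norm_tsum_le_tsum_norm hCsk
      _ ≤ ∑' n : ℕ, ‖t q m0 (n+1) * P (n+1)‖ * ‖q‖ ^ k := by
          apply Summable.tsum_le_tsum hterm hCsk (hCs.mul_right _)
      _ = C * ‖q‖ ^ k := by rw [tsum_mul_right]
  · have := (tendsto_pow_atTop_nhds_zero_of_lt_one (norm_nonneg q) hq).const_mul C
    simpa using this

lemma tendsto_G0 (hq0 : q ≠ 0) (hq : ‖q‖ < 1) (m0 : ℤ) :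
    Tendsto (fun k : ℕ => G0 q (m0 + k)) atTop (nhds 1) := by
  rw [← tendsto_sub_nhds_zero_iff]
  have h := tendsto_tail hq0 hq (fun _ => (1:ℂ))
    (fun m' => (summable_t hq0 hq m').congr (fun n => (mul_one _).symm)) m0
  apply Tendsto.congr _ h
  intro k
  rw [G0_eq, Summable.tsum_eq_zero_add (summable_t hq0 hq (m0 + k)), t_zero]
  simp

lemma cf_zero_zero : cf q 0 0 = Eone q := by
  simp [cf]

lemma tendsto_H (hq0 : q ≠ 0) (hq : ‖q‖ < 1) (m0 : ℤ) :
    Tendsto (fun k : ℕ => H q (m0 + k)) atTop (nhds (Eone q)) := by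
  rw [← tendsto_sub_nhds_zero_iff]
  have h := tendsto_tail hq0 hq (cf q 0) (fun m' => summable_tcf hq0 hq m' 0) m0
  apply Tendsto.congr _ h
  intro k
  rw [H, Summable.tsum_eq_zero_add (summable_tcf hq0 hq (m0+k) 0), t_zero, cf_zero_zero]
  ring

lemma D_eq_two (hq0 : q ≠ 0) (hq : ‖q‖ < 1) (m : ℤ) : D q m = 2 := by
  have hconst : Tendsto (fun k : ℕ => D q (m + k)) atTop (nhds (D q m)) :=
    Tendsto.congr (fun k => (D_add hq0 hq m k).symm) tendsto_const_nhds
  have hlim : Tendsto (fun k : ℕ => D q (m + k)) atTop (nhds 2) := by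
    have l1 := tendsto_G0 hq0 hq m
    have l2 := tendsto_G0 hq0 hq (m+1)
    have l3 := tendsto_H hq0 hq (m+1)
    have l4 := tendsto_H hq0 hq m
    have hcomb : Tendsto (fun k : ℕ => 2 * G0 q (m+k) * G0 q ((m+1)+k)
        + G0 q (m+k) * H q ((m+1)+k) - H q (m+k) * G0 q ((m+1)+k)) atTop
        (nhds (2 * 1 * 1 + 1 * (Eone q) - (Eone q) * 1)) :=
      (((tendsto_const_nhds.mul l1).mul l2).add (l1.mul l3)).sub (l4.mul l2)
    rw [show (2 * 1 * 1 + 1 * (Eone q) - (Eone q) * 1 : ℂ) = 2 by ring] at hcomb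
    apply Tendsto.congr _ hcomb
    intro k
    rw [D_eq hq0 hq, show (m + (k:ℤ)) + 1 = (m+1) + k by ring]
  exact tendsto_nhds_unique hconst hlim

end StmtAux

theorem stmt_9 (q : ℂ) (hq0 : q ≠ 0) (hq : ‖q‖ < 1) (m : ℤ) :
    (Wm q m).det = 2 := by
  have hdet : (Wm q m).det = StmtAux.D q m := by
    rw [Wm, Matrix.det_fin_two_of, StmtAux.D]
  rw [hdet, StmtAux.D_eq_two hq0 hq m]
end
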